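/- arXiv:2104.13678 — 7 statements merged into one kernel-verified Lean document; each statement's English description precedes it below -/
import Mathlib

section
/- Let r = Σ aᵢ ⊗ bᵢ ∈ A ⊗ A be a solution of the associative Yang–Baxter equation of weight λ, i.e., r₁₃r₁₂ - r₁₂r₂₃ + r₂₃r₁₃ = λ r₁₃ in A ⊗ A ⊗ A. Then the linear map P_r : A → A defined by P_r(x) = Σ aᵢ x bᵢ is a Rota–Baxter operator of weight -λ on A. -/
open scoped TensorProduct

/-- If `r = Σ aᵢ ⊗ bᵢ` is a solution of the associative Yang–Baxter equation of
weight `lam`, i.e. `r₁₃r₁₂ - r₁₂r₂₃ + r₂₃r₁₃ = lam • r₁₃` in `A ⊗ A ⊗ A`, then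
`P_r : x ↦ Σ aᵢ x bᵢ` is a Rota–Baxter operator of weight `-lam` on `A`. -/
theorem aybe_weighted_gives_rb {F A : Type*} [Field F] [Ring A] [Algebra F A]
    (lam : F) {m : ℕ} (a b : Fin m → A)
    (hAYBE :
      (∑ i, ∑ j, (a i * a j) ⊗ₜ[F] ((b j) ⊗ₜ[F] (b i)))
        - (∑ i, ∑ j, (a i) ⊗ₜ[F] ((b i * a j) ⊗ₜ[F] (b j)))
        + (∑ i, ∑ j, (a j) ⊗ₜ[F] ((a i) ⊗ₜ[F] (b i * b j)))
      = lam • ∑ i, (a i) ⊗ₜ[F] ((1 : A) ⊗ₜ[F] (b i))) :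
    ∀ x y : A,
      (∑ i, a i * x * b i) * (∑ i, a i * y * b i) =
        ∑ i, a i * ((∑ j, a j * x * b j) * y + x * (∑ j, a j * y * b j)
            + (-lam) • (x * y)) * b i := by
  intro x y
  have h := congrArg (TensorProduct.lift ((LinearMap.mul F A).compl₂
    (TensorProduct.lift (((LinearMap.mul F A).comp (LinearMap.mulLeft F x)).compl₂
      (LinearMap.mulLeft F y))))) hAYBE
  simp only [map_sub, map_add, map_sum, map_smul, TensorProduct.lift.tmul,
    LinearMap.compl₂_apply, LinearMap.mul_apply', LinearMap.comp_apply,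
    LinearMap.mulLeft_apply, mul_one] at h
  simp only [mul_assoc] at h ⊢
  simp only [Finset.sum_mul_sum, Finset.mul_sum, Finset.sum_mul, mul_add, add_mul,
    Finset.sum_add_distrib, mul_smul_comm, smul_mul_assoc, neg_smul, mul_assoc,
    Finset.smul_sum] at h ⊢
  simp only [mul_neg, neg_mul, mul_smul_comm, smul_mul_assoc, Finset.sum_neg_distrib,
    mul_assoc] at h ⊢
  rw [Finset.sum_comm]
  rw [show (∑ x_1 : Fin m, ∑ x_2 : Fin m, a x_2 * (x * (a x_1 * (y * (b x_1 * b x_2)))))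
      = ∑ x_1 : Fin m, ∑ x_2 : Fin m, a x_1 * (x * (a x_2 * (y * (b x_2 * b x_1))))
    by rw [Finset.sum_comm]] at h
  rw [← h]
  abel
end

section
/- Let (A, ω) be a quadratic algebra (ω a non-degenerate symmetric invariant bilinear form: ω(xy,z) = ω(x,yz)) and R a linear operator on A. Define Q on D_R(A) by Q(a + b̄, c + d̄) = ω(a,d) + ω(b,c). If R is a Rota–Baxter operator of weight λ, then Q is invariant (Q(uv,w) = Q(u,vw)) if and only if R(ab) + R*(ab) + λab = 0 for all a,b ∈ A, where R* is the adjoint of R with respect to ω. -/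
/-- The product of the double `D_R(A) = A ⊕ Ā`, where a pair `(a, b)`
represents `a + b̄`. -/
def dmul {F A : Type*} [Field F] [NonUnitalNonAssocRing A] [Module F A]
    (lam : F) (R : A →ₗ[F] A) (p q : A × A) : A × A :=
  (p.1 * q.1 + R (p.1 * q.2) - p.1 * R q.2 + R (p.2 * q.1) - R p.2 * q.1,
   p.1 * q.2 + p.2 * q.1 - R p.2 * q.2 - p.2 * R q.2 - lam • (p.2 * q.2))

/-- Let `(A, ω)` be a quadratic algebra (`ω` non-degenerate, symmetric, invariant),
`R` a Rota–Baxter operator of weight `lam` on `A` with adjoint `Rs`, and define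
`Q(a + b̄, c + d̄) = ω(a,d) + ω(b,c)` on `D_R(A)`. Then `Q` is invariant iff
`R(ab) + R*(ab) + λ·ab = 0` for all `a,b ∈ A`. -/
theorem double_form_invariant_iff {F A : Type*} [Field F]
    [NonUnitalNonAssocRing A] [Module F A]
    (lam : F) (ω : A →ₗ[F] A →ₗ[F] F)
    (hsym : ∀ x y : A, ω x y = ω y x)
    (hinv : ∀ x y z : A, ω (x * y) z = ω x (y * z))
    (hnd : ∀ x : A, (∀ y : A, ω x y = 0) → x = 0)
    (R Rs : A →ₗ[F] A)
    (hadj : ∀ x y : A, ω (R x) y = ω x (Rs y))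
    (hR : ∀ x y : A, R x * R y = R (R x * y + x * R y + lam • (x * y))) :
    (∀ u v w : A × A,
        ω (dmul lam R u v).1 w.2 + ω (dmul lam R u v).2 w.1 =
          ω u.1 (dmul lam R v w).2 + ω u.2 (dmul lam R v w).1)
      ↔ (∀ a b : A, R (a * b) + Rs (a * b) + lam • (a * b) = 0) := by
  constructor
  · intro hQ a d
    apply hnd
    intro f
    have key := hQ (a, 0) (0, d) (0, f)
    simp only [dmul, mul_zero, zero_mul, map_zero, add_zero, zero_add, sub_zero, zero_sub,
      smul_zero, map_sub, map_add, map_smul, map_neg, LinearMap.sub_apply, LinearMap.add_apply,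
      LinearMap.smul_apply, smul_eq_mul] at key ⊢
    linear_combination key + hinv a (R d) f + hsym (Rs (a*d)) f - hadj f (a*d) +
      hsym (R f) (a*d) + hinv a d (R f) + lam * hinv a d f
  · intro h u v w
    obtain ⟨a, b⟩ := u; obtain ⟨c, d⟩ := v; obtain ⟨e, f⟩ := w
    have Hf_ad : ω (R (a*d)) f + ω (Rs (a*d)) f + lam * ω (a*d) f = 0 := by
      have := congrArg (fun t => ω t f) (h a d)
      simpa [smul_eq_mul] using this
    have Hf_bc : ω (R (b*c)) f + ω (Rs (b*c)) f + lam * ω (b*c) f = 0 := by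
      have := congrArg (fun t => ω t f) (h b c)
      simpa [smul_eq_mul] using this
    have Hb_cf : ω b (R (c*f)) + ω b (Rs (c*f)) + lam * ω b (c*f) = 0 := by
      have := congrArg (fun t => ω b t) (h c f)
      simpa [smul_eq_mul] using this
    have Hb_de : ω b (R (d*e)) + ω b (Rs (d*e)) + lam * ω b (d*e) = 0 := by
      have := congrArg (fun t => ω b t) (h d e)
      simpa [smul_eq_mul] using this
    simp only [dmul, map_sub, map_add, map_smul, LinearMap.sub_apply, LinearMap.add_apply,
      LinearMap.smul_apply, smul_eq_mul]
    linear_combination hinv a c f + hinv a d e + hinv b c e - hinv a (R d) f - hinv b (R d) e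
      + Hf_ad - (hsym (Rs (a*d)) f - hadj f (a*d) + hsym (R f) (a*d) + hinv a d (R f))
      - lam * hinv a d f
      + Hf_bc - (hsym (Rs (b*c)) f - hadj f (b*c) + hsym (R f) (b*c) + hinv b c (R f))
      - lam * hinv b c f
      - (hinv (R b) c f + hadj b (c*f)) - Hb_cf
      - (hinv (R b) d e + hadj b (d*e)) - Hb_de - lam * hinv b d e
end

section
/- There is no Rota–Baxter operator R of weight 1 on the matrix algebra Mₙ(F) (F a field of characteristic 0) satisfying R + R* + id = 0, where R* is the adjoint of R with respect to the trace form ω(x,y) = tr(xy). -/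
open Matrix

namespace NoSkewRBAux

variable {F : Type*} [Field F] {n : ℕ}

private def E (i j : Fin n) : Matrix (Fin n) (Fin n) F := Matrix.single i j (1 : F)

private lemma trace_mul_E (A : Matrix (Fin n) (Fin n) F) (i j : Fin n) :
    (A * E i j).trace = A j i := by
  simp [Matrix.trace, Matrix.diag, Matrix.mul_apply, E, Matrix.single, ite_and]

variable (R : Matrix (Fin n) (Fin n) F →ₗ[F] Matrix (Fin n) (Fin n) F)

/-- `B = 2R + id`. -/
private def Bop (x : Matrix (Fin n) (Fin n) F) : Matrix (Fin n) (Fin n) F := R x + R x + x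

private lemma hI (hRB : ∀ x y, R x * R y = R (R x * y + x * R y + x * y))
    (x y : Matrix (Fin n) (Fin n) F) :
    Bop R (Bop R x * y + x * Bop R y) = Bop R x * Bop R y + x * y := by
  have e1 : Bop R x * y + x * Bop R y
      = (R x * y + x * R y + x * y) + (R x * y + x * R y + x * y) := by
    simp only [Bop]; noncomm_ring
  rw [e1]
  simp only [Bop]
  rw [map_add R, ← hRB]
  noncomm_ring

private lemma hskewB
    (Rs : Matrix (Fin n) (Fin n) F →ₗ[F] Matrix (Fin n) (Fin n) F)
    (hadj : ∀ x y, (R x * y).trace = (x * Rs y).trace)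
    (hskew : ∀ x, R x + Rs x + x = 0)
    (x y : Matrix (Fin n) (Fin n) F) :
    (Bop R x * y).trace + (x * Bop R y).trace = 0 := by
  have key : (R x * y).trace = (x * Rs y).trace := hadj x y
  have z : (x * (R y + Rs y + y)).trace = 0 := by rw [hskew y, mul_zero, trace_zero]
  simp only [mul_add, trace_add] at z
  simp only [Bop, add_mul, mul_add, trace_add]
  linear_combination (2 : F) * key + (2 : F) * z

private lemma hES
    (Rs : Matrix (Fin n) (Fin n) F →ₗ[F] Matrix (Fin n) (Fin n) F)
    (hadj : ∀ x y, (R x * y).trace = (x * Rs y).trace)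
    (hskew : ∀ x, R x + Rs x + x = 0)
    (p q a c : Fin n) :
    Bop R (E c p) a q + Bop R (E q a) p c = 0 := by
  have h := hskewB R Rs hadj hskew (E c p) (E q a)
  rwa [trace_mul_E, trace_mul_comm, trace_mul_E] at h

private lemma sum_EE (a c : Fin n) :
    (∑ b, (E b a * E c b : Matrix (Fin n) (Fin n) F))
      = if a = c then (1 : Matrix (Fin n) (Fin n) F) else 0 := by
  by_cases h : a = c
  · subst h
    simp only [if_pos rfl]
    have he : ∀ b : Fin n, (E b a * E a b : Matrix (Fin n) (Fin n) F) = E b b := by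
      intro b
      simp [E, Matrix.single_mul_single_same]
    rw [Finset.sum_congr rfl fun b _ => he b]
    ext p q
    simp [E, Matrix.sum_apply, Matrix.single, Matrix.one_apply, ite_and, eq_comm]
  · simp only [if_neg h]
    have he : ∀ b : Fin n, (E b a * E c b : Matrix (Fin n) (Fin n) F) = 0 := by
      intro b
      simp only [E]
      exact Matrix.single_mul_single_of_ne (1 : F) b a c h 1
    rw [Finset.sum_congr rfl fun b _ => he b, Finset.sum_const, smul_zero]

private lemma sum_cross
    (Rs : Matrix (Fin n) (Fin n) F →ₗ[F] Matrix (Fin n) (Fin n) F)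
    (hadj : ∀ x y, (R x * y).trace = (x * Rs y).trace)
    (hskew : ∀ x, R x + Rs x + x = 0)
    (a c : Fin n) :
    (∑ b, (Bop R (E b a) * E c b + E b a * Bop R (E c b))) = 0 := by
  ext p q
  rw [Matrix.sum_apply]
  have hterm : ∀ b : Fin n,
      ((Bop R (E b a) * E c b + E b a * Bop R (E c b)
        : Matrix (Fin n) (Fin n) F)) p q
      = (if b = q then Bop R (E q a) p c else 0)
        + (if b = p then Bop R (E c p) a q else 0) := by
    intro b
    rw [Matrix.add_apply]
    congr 1
    · by_cases hb : b = q
      · subst hb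
        rw [if_pos rfl]
        simp [E]
      · rw [if_neg hb]
        simp [E, Ne.symm hb]
    · by_cases hb : b = p
      · subst hb
        rw [if_pos rfl]
        simp [E]
      · rw [if_neg hb]
        simp [E, Ne.symm hb]
  rw [Finset.sum_congr rfl fun b _ => hterm b, Finset.sum_add_distrib]
  simp only [Finset.sum_ite_eq', Finset.mem_univ, if_pos]
  rw [Matrix.zero_apply]
  have := hES R Rs hadj hskew p q a c
  linear_combination this

private lemma hKey
    (Rs : Matrix (Fin n) (Fin n) F →ₗ[F] Matrix (Fin n) (Fin n) F)
    (hRB : ∀ x y, R x * R y = R (R x * y + x * R y + x * y))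
    (hadj : ∀ x y, (R x * y).trace = (x * Rs y).trace)
    (hskew : ∀ x, R x + Rs x + x = 0)
    (a c : Fin n) :
    (∑ b, Bop R (E b a) * Bop R (E c b))
      = if a = c then (-1 : Matrix (Fin n) (Fin n) F) else 0 := by
  have hterm : ∀ b : Fin n, Bop R (E b a) * Bop R (E c b)
      = Bop R (Bop R (E b a) * E c b + E b a * Bop R (E c b)) - E b a * E c b := by
    intro b
    rw [hI R hRB]
    abel
  rw [Finset.sum_congr rfl fun b _ => hterm b, Finset.sum_sub_distrib]
  have hB0 : (∑ b, Bop R (Bop R (E b a) * E c b + E b a * Bop R (E c b)))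
      = Bop R (∑ b, (Bop R (E b a) * E c b + E b a * Bop R (E c b))) := by
    simp only [Bop, map_add, map_sum, Finset.sum_add_distrib]
    try abel
  rw [hB0, sum_cross R Rs hadj hskew, sum_EE]
  have hz : Bop R (0 : Matrix (Fin n) (Fin n) F) = 0 := by simp [Bop]
  rw [hz, zero_sub]
  try (by_cases h : a = c <;> simp [h])

end NoSkewRBAux

open NoSkewRBAux in
/-- There is no Rota–Baxter operator `R` of weight `1` on `Mₙ(F)` (char F = 0, n ≥ 1)
satisfying `R + R* + id = 0`, where `R*` is the adjoint with respect to the trace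
form `ω(x,y) = tr(xy)`. -/
theorem no_skew_rb_weight_one_on_matrices {F : Type*} [Field F] [CharZero F]
    {n : ℕ} (hn : 0 < n)
    (R Rs : Matrix (Fin n) (Fin n) F →ₗ[F] Matrix (Fin n) (Fin n) F)
    (hRB : ∀ x y, R x * R y = R (R x * y + x * R y + x * y))
    (hadj : ∀ x y, (R x * y).trace = (x * Rs y).trace)
    (hskew : ∀ x, R x + Rs x + x = 0) :
    False := by
  classical
  set s : Matrix (Fin n × Fin n) (Fin n × Fin n) F :=
    Matrix.of (fun x y => Bop R (E y.2 x.2) x.1 y.1) with hs_def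
  set S : Matrix (Fin n × Fin n) (Fin n × Fin n) F :=
    Matrix.of (fun x y => if x.1 = y.2 ∧ x.2 = y.1 then (1 : F) else 0) with hS_def
  -- s * s = -1
  have hss : s * s = -1 := by
    ext ⟨p, a⟩ ⟨q, c⟩
    rw [Matrix.mul_apply]
    rw [show (∑ z : Fin n × Fin n, s (p, a) z * s z (q, c))
        = ∑ r : Fin n, ∑ b : Fin n, s (p, a) (r, b) * s (r, b) (q, c) from
      Fintype.sum_prod_type _]
    rw [Finset.sum_comm]
    have inner : ∀ b : Fin n,
        (∑ r : Fin n, s (p, a) (r, b) * s (r, b) (q, c))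
        = (Bop R (E b a) * Bop R (E c b)) p q := by
      intro b
      rw [Matrix.mul_apply]
      rfl
    rw [Finset.sum_congr rfl fun b _ => inner b, ← Matrix.sum_apply,
      hKey R Rs hRB hadj hskew a c]
    by_cases h : a = c
    · subst h
      simp [Matrix.one_apply, Prod.ext_iff]
    · simp [Matrix.one_apply, Prod.ext_iff, h]
  -- anticommutation
  have han : s * S = -(S * s) := by
    ext ⟨p, a⟩ ⟨q, c⟩
    have h1 : (s * S) (p, a) (q, c) = Bop R (E q a) p c := by
      rw [Matrix.mul_apply]
      have hz : ∀ z : Fin n × Fin n, s (p, a) z * S z (q, c)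
          = if z = ((c, q) : Fin n × Fin n) then s (p, a) (c, q) else 0 := by
        intro z
        by_cases h : z = ((c, q) : Fin n × Fin n)
        · subst h
          show s (p, a) (c, q) * (if c = c ∧ q = q then (1:F) else 0) = _
          rw [if_pos ⟨rfl, rfl⟩, mul_one, if_pos rfl]
        · have hne : ¬(z.1 = c ∧ z.2 = q) := by
            intro hc
            exact h (Prod.ext hc.1 hc.2)
          show s (p, a) z * (if z.1 = c ∧ z.2 = q then (1:F) else 0) = _
          rw [if_neg hne, mul_zero, if_neg h]
      rw [Finset.sum_congr rfl fun z _ => hz z, Finset.sum_ite_eq' Finset.univ]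
      rw [if_pos (Finset.mem_univ _)]
      rfl
    have h2 : (S * s) (p, a) (q, c) = Bop R (E c p) a q := by
      rw [Matrix.mul_apply]
      have hz : ∀ z : Fin n × Fin n, S (p, a) z * s z (q, c)
          = if z = ((a, p) : Fin n × Fin n) then s (a, p) (q, c) else 0 := by
        intro z
        by_cases h : z = ((a, p) : Fin n × Fin n)
        · subst h
          show (if p = p ∧ a = a then (1:F) else 0) * s (a, p) (q, c) = _
          rw [if_pos ⟨rfl, rfl⟩, one_mul, if_pos rfl]
        · have hne : ¬(p = z.2 ∧ a = z.1) := by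
            intro hc
            exact h (Prod.ext hc.2.symm hc.1.symm)
          show (if p = z.2 ∧ a = z.1 then (1:F) else 0) * s z (q, c) = _
          rw [if_neg hne, zero_mul, if_neg h]
      rw [Finset.sum_congr rfl fun z _ => hz z, Finset.sum_ite_eq' Finset.univ]
      rw [if_pos (Finset.mem_univ _)]
      rfl
    rw [Matrix.neg_apply, h1, h2]
    have := hES R Rs hadj hskew p q a c
    linear_combination this
  -- S = s * S * s
  have hSsS : S = s * S * s := by
    have h : s * S * s = -(S * s) * s := by rw [han]
    rw [h, neg_mul, mul_assoc, hss, mul_neg_one, neg_neg]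
  -- trace computation
  have htr1 : S.trace = -S.trace := by
    conv_lhs => rw [hSsS]
    rw [trace_mul_comm (s * S) s, ← mul_assoc, hss, neg_one_mul, trace_neg]
  have htrS : S.trace = (n : F) := by
    have ht : S.trace = ∑ z : Fin n × Fin n, S z z := rfl
    rw [ht, show (∑ z : Fin n × Fin n, S z z)
        = ∑ p : Fin n, ∑ a : Fin n, S (p, a) (p, a) from Fintype.sum_prod_type _]
    have hv : ∀ p a : Fin n, S (p, a) (p, a) = if a = p then (1 : F) else 0 := by
      intro p a
      show (if p = a ∧ a = p then (1:F) else 0) = _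
      by_cases h : a = p
      · rw [if_pos ⟨h.symm, h⟩, if_pos h]
      · rw [if_neg (fun hc => h hc.2), if_neg h]
    simp only [hv, Finset.sum_ite_eq', Finset.mem_univ, if_pos]
    simp
  have hn0 : (n : F) = 0 := by
    have h2 : (2 : F) * S.trace = 0 := by linear_combination htr1
    rcases mul_eq_zero.mp h2 with h | h
    · exact absurd h two_ne_zero
    · rw [htrS] at h; exact h
  have : n = 0 := Nat.cast_eq_zero.mp hn0
  omega
end

section
/- Let (A, ω) be a unital quadratic algebra with tr(a) := ω(a,1), and let R be a λ-skew-symmetric Rota–Baxter operator of weight λ on A, i.e., R(a) + R*(a) + λa = λtr(a)·1 for all a. Then R* is also a λ-skew-symmetric Rota–Baxter operator of weight λ on A. -/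
/-- Let `(A, ω)` be a unital quadratic algebra with `tr a := ω(a,1)`, and let `R`
be a `λ`-skew-symmetric Rota–Baxter operator of weight `λ` on `A`, i.e.
`R a + R* a + λa = λ tr(a) 1`. Then `R*` is also a `λ`-skew-symmetric
Rota–Baxter operator of weight `λ` on `A` (its adjoint being `R`). -/
theorem adjoint_of_lam_skew_rb_is_rb {F A : Type*} [Field F] [Ring A] [Algebra F A]
    (lam : F) (ω : A →ₗ[F] A →ₗ[F] F)
    (hsym : ∀ x y : A, ω x y = ω y x)
    (hinv : ∀ x y z : A, ω (x * y) z = ω x (y * z))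
    (hnd : ∀ x : A, (∀ y : A, ω x y = 0) → x = 0)
    (R Rs : A →ₗ[F] A)
    (hadj : ∀ x y : A, ω (R x) y = ω x (Rs y))
    (hRB : ∀ x y : A, R x * R y = R (R x * y + x * R y + lam • (x * y)))
    (hskew : ∀ a : A, R a + Rs a + lam • a = (lam * ω a 1) • (1 : A)) :
    (∀ x y : A, ω (Rs x) y = ω x (R y)) ∧
    (∀ x y : A, Rs x * Rs y = Rs (Rs x * y + x * Rs y + lam • (x * y))) ∧
    (∀ a : A, Rs a + R a + lam • a = (lam * ω a 1) • (1 : A)) := by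
  have h1 : ∀ x y : A, ω (Rs x) y = ω x (R y) := by
    intro x y
    rw [hsym, ← hadj, hsym]
  have hRs : ∀ a : A, Rs a = (lam * ω a 1) • (1 : A) - R a - lam • a := by
    intro a
    rw [← hskew a]; abel
  have hkey : ∀ y z : A,
      R (Rs y * z) = R (y * R z) + Rs y * R z + lam • (y * R z) := by
    intro y z
    have hrb := hRB y z
    rw [map_add, map_add, map_smul] at hrb
    rw [hRs y]
    simp only [sub_mul, smul_mul_assoc, one_mul, map_sub, map_smul]
    rw [hrb]
    abel
  refine ⟨h1, ?_, ?_⟩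
  · intro x y
    have hz : ∀ z : A,
        ω (Rs x * Rs y - Rs (Rs x * y + x * Rs y + lam • (x * y))) z = 0 := by
      intro z
      have e1 : ω (Rs x * Rs y) z = ω x (R (Rs y * z)) := by
        rw [hinv, h1]
      have e2 : ω (Rs (Rs x * y + x * Rs y + lam • (x * y))) z
          = ω x (R (Rs y * z)) := by
        rw [h1, hkey y z]
        simp only [map_add, map_smul, LinearMap.add_apply, LinearMap.smul_apply]
        rw [hinv (Rs x) y (R z), h1, hinv x (Rs y) (R z), hinv x y (R z)]
      rw [map_sub, LinearMap.sub_apply, e1, e2, sub_self]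
    exact sub_eq_zero.mp (hnd _ hz)
  · intro a
    rw [← hskew a]; abel
end

section
/- Let R be a λ-skew-symmetric Rota–Baxter operator of weight λ ≠ 0 on Mₙ(F) (char F = 0) and set I₂' = ker(R + λ·id). Then I₂' contains no nonzero idempotent; in particular, I₂' is a nil (nilpotent) ideal of the subalgebra R(Mₙ(F)). -/
open Polynomial

/-- Let `R` be a `λ`-skew-symmetric Rota–Baxter operator of weight `λ ≠ 0` on
`Mₙ(F)` (char F = 0) and `I₂' = ker(R + λ·id)`. Then `I₂'` contains no nonzero
idempotent; in particular `I₂'` is a nil ideal of the subalgebra `R(Mₙ(F))`. -/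
theorem ker_R_add_lam_nil_ideal {F : Type*} [Field F] [CharZero F] {n : ℕ}
    (lam : F) (hlam : lam ≠ 0)
    (R Rs : Matrix (Fin n) (Fin n) F →ₗ[F] Matrix (Fin n) (Fin n) F)
    (hRB : ∀ x y, R x * R y = R (R x * y + x * R y + lam • (x * y)))
    (hadj : ∀ x y, (R x * y).trace = (x * Rs y).trace)
    (hskew : ∀ x, R x + Rs x + lam • x = (lam * x.trace) • (1 : Matrix (Fin n) (Fin n) F)) :
    (∀ e : Matrix (Fin n) (Fin n) F, R e + lam • e = 0 → e * e = e → e = 0) ∧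
    (∀ x : Matrix (Fin n) (Fin n) F, R x + lam • x = 0 → ∃ m : ℕ, 0 < m ∧ x ^ m = 0) ∧
    (∀ x y : Matrix (Fin n) (Fin n) F, R x + lam • x = 0 →
        (R (R y * x) + lam • (R y * x) = 0 ∧ R (x * R y) + lam • (x * R y) = 0)) := by
  classical
  -- `R u = -(lam • u)` for elements of the kernel
  have hRx : ∀ u : Matrix (Fin n) (Fin n) F, R u + lam • u = 0 → R u = -(lam • u) := by
    intro u hu
    exact eq_neg_of_add_eq_zero_left hu
  -- the adjoint on the kernel
  have hRs : ∀ v : Matrix (Fin n) (Fin n) F, R v + lam • v = 0 →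
      Rs v = (lam * v.trace) • (1 : Matrix (Fin n) (Fin n) F) := by
    intro v hv
    have h := hskew v
    have h2 : Rs v = (lam * v.trace) • (1 : Matrix (Fin n) (Fin n) F) - (R v + lam • v) := by
      rw [← h]; abel
    rw [hv, sub_zero] at h2
    exact h2
  -- trace identity on the kernel
  have htr : ∀ u v : Matrix (Fin n) (Fin n) F, R u + lam • u = 0 → R v + lam • v = 0 →
      (u * v).trace = -(u.trace * v.trace) := by
    intro u v hu hv
    have h := hadj u v
    rw [hRx u hu, hRs v hv] at h
    rw [neg_mul, smul_mul_assoc, mul_smul_comm, Matrix.trace_neg, Matrix.trace_smul,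
      Matrix.trace_smul, mul_one, smul_eq_mul, smul_eq_mul] at h
    -- h : -(lam * (u * v).trace) = lam * v.trace * u.trace
    refine mul_left_cancel₀ hlam ?_
    linear_combination -h
  -- kernel is closed under multiplication
  have hmulK : ∀ u v : Matrix (Fin n) (Fin n) F, R u + lam • u = 0 → R v + lam • v = 0 →
      R (u * v) + lam • (u * v) = 0 := by
    intro u v hu hv
    have h := hRB u v
    rw [hRx u hu, hRx v hv] at h
    have harg : -(lam • u) * v + u * -(lam • v) + lam • (u * v) = (-lam) • (u * v) := by
      rw [neg_mul, mul_neg, smul_mul_assoc, mul_smul_comm, neg_smul]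
      abel
    rw [harg, map_smul] at h
    have hL : -(lam • u) * -(lam • v) = (lam * lam) • (u * v) := by
      rw [neg_mul, mul_neg, neg_neg, smul_mul_assoc, mul_smul_comm, smul_smul]
    rw [hL] at h
    -- h : (lam * lam) • (u * v) = (-lam) • R (u * v)
    have h2 : lam • (R (u * v) + lam • (u * v)) = 0 := by
      rw [smul_add, smul_smul, h, neg_smul]
      abel
    rcases smul_eq_zero.mp h2 with h3 | h3
    · exact absurd h3 hlam
    · exact h3
  -- kernel is closed under scalar multiplication and addition
  have hsmulK : ∀ (c : F) (u : Matrix (Fin n) (Fin n) F), R u + lam • u = 0 →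
      R (c • u) + lam • (c • u) = 0 := by
    intro c u hu
    rw [map_smul, smul_comm lam c, ← smul_add, hu, smul_zero]
  have haddK : ∀ u v : Matrix (Fin n) (Fin n) F, R u + lam • u = 0 → R v + lam • v = 0 →
      R (u + v) + lam • (u + v) = 0 := by
    intro u v hu hv
    have h : R (u + v) + lam • (u + v) = (R u + lam • u) + (R v + lam • v) := by
      rw [map_add, smul_add]; abel
    rw [h, hu, hv, add_zero]
  -- Part 1 : no nonzero idempotents in the kernel
  have part1 : ∀ e : Matrix (Fin n) (Fin n) F, R e + lam • e = 0 → e * e = e → e = 0 := by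
    intro e he hee
    have ht : e.trace = -(e.trace * e.trace) := by
      have h := htr e e he he
      rwa [hee] at h
    -- trace of an idempotent is its rank
    have hcomp : (Matrix.toLin' e) ∘ₗ (Matrix.toLin' e) = Matrix.toLin' e := by
      rw [← Matrix.toLin'_mul, hee]
    have hproj : LinearMap.IsProj (LinearMap.range (Matrix.toLin' e)) (Matrix.toLin' e) := by
      refine ⟨fun x => LinearMap.mem_range_self _ x, ?_⟩
      rintro x ⟨y, rfl⟩
      have h := DFunLike.congr_fun hcomp y
      simpa using h
    have htrace := hproj.trace
    have hmt : LinearMap.trace F (Fin n → F) (Matrix.toLin' e) = e.trace := by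
      rw [LinearMap.trace_eq_matrix_trace F (Pi.basisFun F (Fin n)),
        LinearMap.toMatrix_eq_toMatrix', LinearMap.toMatrix'_toLin']
    set d := Module.finrank F (LinearMap.range (Matrix.toLin' e)) with hd
    have hde : (d : F) = e.trace := by rw [← hmt, htrace]
    have hd0 : d = 0 := by
      have h2 : (d : F) * (1 + (d : F)) = 0 := by
        linear_combination (1 + (d : F) + e.trace) * hde + ht
      have h3 : (1 + (d : F)) ≠ 0 := by
        have h4 : ((1 + d : ℕ) : F) ≠ 0 := Nat.cast_ne_zero.mpr (by omega)
        simpa using h4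
      rcases mul_eq_zero.mp h2 with h4 | h4
      · exact Nat.cast_eq_zero.mp h4
      · exact absurd h4 h3
    have hrange : LinearMap.range (Matrix.toLin' e) = ⊥ := Submodule.finrank_eq_zero.mp hd0
    have h0 : Matrix.toLin' e = 0 := LinearMap.range_eq_bot.mp hrange
    have h1 : Matrix.toLin' e = Matrix.toLin' (0 : Matrix (Fin n) (Fin n) F) := by
      rw [h0, map_zero]
    exact Matrix.toLin'.injective h1
  -- evaluating a polynomial with zero constant term at a kernel element stays in the kernel
  have hkey : ∀ x : Matrix (Fin n) (Fin n) F, R x + lam • x = 0 → ∀ (N : ℕ) (c : F[X]),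
      c.natDegree ≤ N →
      R (x * (Polynomial.aeval x) c) + lam • (x * (Polynomial.aeval x) c) = 0 := by
    intro x hx N
    induction N with
    | zero =>
      intro c hc
      rw [Polynomial.eq_C_of_natDegree_le_zero hc]
      have hval : x * (Polynomial.aeval x) (Polynomial.C (c.coeff 0)) = (c.coeff 0) • x := by
        rw [Polynomial.aeval_C, Algebra.algebraMap_eq_smul_one, mul_smul_comm, mul_one]
      rw [hval]
      exact hsmulK _ _ hx
    | succ N ih =>
      intro c hc
      have hdiv : c.divX.natDegree ≤ N := by
        rw [Polynomial.natDegree_divX_eq_natDegree_tsub_one]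
        omega
      have hdecomp : x * (Polynomial.aeval x) c
          = (c.coeff 0) • x + x * (x * (Polynomial.aeval x) c.divX) := by
        conv_lhs => rw [← Polynomial.X_mul_divX_add c]
        rw [map_add, map_mul, Polynomial.aeval_X, Polynomial.aeval_C,
          Algebra.algebraMap_eq_smul_one, mul_add, mul_smul_comm, mul_one, ← mul_assoc,
          add_comm, mul_assoc]
      rw [hdecomp]
      exact haddK _ _ (hsmulK _ _ hx) (hmulK _ _ hx (ih c.divX hdiv))
  have haeval : ∀ x : Matrix (Fin n) (Fin n) F, R x + lam • x = 0 → ∀ P : F[X], P.coeff 0 = 0 →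
      R ((Polynomial.aeval x) P) + lam • ((Polynomial.aeval x) P) = 0 := by
    intro x hx P hP
    have h : (Polynomial.aeval x) P = x * (Polynomial.aeval x) P.divX := by
      conv_lhs => rw [← Polynomial.X_mul_divX_add P]
      rw [hP, map_add, map_mul, Polynomial.aeval_X, map_zero, map_zero, add_zero]
    rw [h]
    exact hkey x hx P.divX.natDegree P.divX le_rfl
  -- Part 2 : every kernel element is nilpotent
  have part2 : ∀ x : Matrix (Fin n) (Fin n) F, R x + lam • x = 0 →
      ∃ m : ℕ, 0 < m ∧ x ^ m = 0 := by
    intro x hx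
    have hint : IsIntegral F x := IsIntegral.of_finite F x
    have hp0 : (Polynomial.aeval x) (minpoly F x) = 0 := minpoly.aeval F x
    have hpne : minpoly F x ≠ 0 := minpoly.ne_zero hint
    obtain ⟨q, hpq, hqnd⟩ :=
      (minpoly F x).exists_eq_pow_rootMultiplicity_mul_and_not_dvd hpne 0
    rw [map_zero, sub_zero] at hpq hqnd
    set r := (minpoly F x).rootMultiplicity 0 with hr
    rcases Nat.eq_zero_or_pos r with hr0 | hrpos
    · -- case r = 0 : then 1 lies in the kernel, so the ring is trivial
      have hq0 : q.coeff 0 ≠ 0 := fun h => hqnd (Polynomial.X_dvd_iff.mpr h)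
      have haq : (Polynomial.aeval x) q = 0 := by
        rw [hpq, hr0, pow_zero, one_mul] at hp0
        exact hp0
      have hPc : (q - Polynomial.C (q.coeff 0)).coeff 0 = 0 := by simp
      have hmem := haeval x hx _ hPc
      have hval : (Polynomial.aeval x) (q - Polynomial.C (q.coeff 0))
          = (-(q.coeff 0)) • (1 : Matrix (Fin n) (Fin n) F) := by
        rw [map_sub, haq, Polynomial.aeval_C, Algebra.algebraMap_eq_smul_one, zero_sub, neg_smul]
      rw [hval] at hmem
      have h1K : R (1 : Matrix (Fin n) (Fin n) F) + lam • (1 : Matrix (Fin n) (Fin n) F) = 0 := by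
        have hc : (-(q.coeff 0)) ≠ 0 := neg_ne_zero.mpr hq0
        have := hsmulK (-(q.coeff 0))⁻¹ _ hmem
        rwa [smul_smul, inv_mul_cancel₀ hc, one_smul] at this
      have h10 : (1 : Matrix (Fin n) (Fin n) F) = 0 := part1 1 h1K (one_mul 1)
      refine ⟨1, one_pos, ?_⟩
      rw [pow_one, ← mul_one x, h10, mul_zero]
    · -- case r ≥ 1
      have hcop : IsCoprime ((Polynomial.X : F[X]) ^ r) q :=
        ((Polynomial.prime_X.coprime_iff_not_dvd).mpr hqnd).pow_left
      obtain ⟨a, b, hab⟩ := hcop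
      set e := x ^ r * (Polynomial.aeval x) a with he
      have hcoeff : ((Polynomial.X : F[X]) ^ r * a).coeff 0 = 0 := by
        apply Polynomial.X_dvd_iff.mp
        exact dvd_mul_of_dvd_left (dvd_pow_self _ hrpos.ne') a
      have heK : R e + lam • e = 0 := by
        have h := haeval x hx _ hcoeff
        rwa [map_mul, map_pow, Polynomial.aeval_X] at h
      have hee : e * e = e := by
        have hpoly : (Polynomial.X ^ r * a) * (Polynomial.X ^ r * a) - (Polynomial.X ^ r * a)
            = -(a * b * (minpoly F x)) := by
          rw [hpq]
          linear_combination ((Polynomial.X : F[X]) ^ r * a) * hab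
        have h := congrArg (Polynomial.aeval x) hpoly
        simp only [map_sub, map_neg, map_mul, map_pow, Polynomial.aeval_X, hp0, mul_zero,
          neg_zero] at h
        rw [he]
        exact sub_eq_zero.mp h
      have he0 : e = 0 := part1 e heK hee
      have hxr : x ^ r = 0 := by
        have hpoly2 : (Polynomial.X : F[X]) ^ r
            = (Polynomial.X ^ r * a) * Polynomial.X ^ r + b * (minpoly F x) := by
          rw [hpq]
          linear_combination (-((Polynomial.X : F[X]) ^ r)) * hab
        have h := congrArg (Polynomial.aeval x) hpoly2
        simp only [map_add, map_mul, map_pow, Polynomial.aeval_X, hp0, mul_zero,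
          add_zero] at h
        rw [← he, he0, zero_mul] at h
        exact h
      exact ⟨r, hrpos, hxr⟩
  -- Part 3 : the kernel is an ideal for multiplication by elements of the image of R
  refine ⟨part1, part2, ?_⟩
  intro x y hx
  have hRxx : R x = -(lam • x) := hRx x hx
  constructor
  · have h := hRB y x
    rw [hRxx] at h
    have harg : R y * x + y * -(lam • x) + lam • (y * x) = R y * x := by
      rw [mul_neg, mul_smul_comm]
      abel
    rw [harg, mul_neg, mul_smul_comm] at h
    -- h : -(lam • (R y * x)) = R (R y * x)
    rw [← h]
    abel
  · have h := hRB x y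
    rw [hRxx] at h
    have harg : -(lam • x) * y + x * R y + lam • (x * y) = x * R y := by
      rw [neg_mul, smul_mul_assoc]
      abel
    rw [harg, neg_mul, smul_mul_assoc] at h
    -- h : -(lam • (x * R y)) = R (x * R y)
    rw [← h]
    abel
end

section
/- Define a double bracket on V = F[t] by ⟦tⁿ, tᵐ⟧ = -(tⁿ ⊗ t^{m+1} - tᵐ ⊗ t^{n+1})/(t⊗1 - 1⊗t), i.e., ⟦tⁿ,tᵐ⟧ = -(tᵐ⊗tⁿ + t^{m+1}⊗t^{n-1} + ... + t^{n-1}⊗t^{m+1}) for m < n and ⟦tⁿ,tᵐ⟧ = tⁿ⊗tᵐ + t^{n+1}⊗t^{m-1} + ... + t^{m-1}⊗t^{n+1} for m ≥ n. Then this bracket satisfies the 1-double Lie anti-commutativity: ⟦a,b⟧ + τ(⟦b,a⟧) = a⊗b - b⊗a for all a,b ∈ F[t], where τ is the tensor switch. -/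
open scoped TensorProduct

/-- The bracket `⟦tⁿ, tᵐ⟧ = -(tⁿ ⊗ t^{m+1} - tᵐ ⊗ t^{n+1})/(t⊗1 - 1⊗t)` on
monomials: for `n ≤ m` it is `Σ_{j<m-n} t^{n+j} ⊗ t^{m-j}` and for `m < n` it is
`-Σ_{k<n-m} t^{m+k} ⊗ t^{n-k}`. -/
noncomputable def brMono (F : Type*) [Field F] (n m : ℕ) :
    Polynomial F ⊗[F] Polynomial F :=
  if n ≤ m then
    ∑ j ∈ Finset.range (m - n), (Polynomial.X ^ (n + j)) ⊗ₜ[F] (Polynomial.X ^ (m - j))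
  else
    -∑ k ∈ Finset.range (n - m), (Polynomial.X ^ (m + k)) ⊗ₜ[F] (Polynomial.X ^ (n - k))

/-- The bilinear extension of `brMono` to `F[t]`. -/
noncomputable def Dbr (F : Type*) [Field F] :
    Polynomial F →ₗ[F] Polynomial F →ₗ[F] (Polynomial F ⊗[F] Polynomial F) :=
  (Polynomial.basisMonomials F).constr F fun n =>
    (Polynomial.basisMonomials F).constr F fun m => brMono F n m

lemma brMono_key_le (F : Type*) [Field F] {n m : ℕ} (h : n ≤ m) :
    brMono F n m + (TensorProduct.comm F (Polynomial F) (Polynomial F)) (brMono F m n)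
      = (Polynomial.X ^ n) ⊗ₜ[F] (Polynomial.X ^ m)
        - (Polynomial.X ^ m) ⊗ₜ[F] (Polynomial.X ^ n) := by
  rcases eq_or_lt_of_le h with rfl | h'
  · simp [brMono]
  · unfold brMono
    rw [if_pos h, if_neg (not_le.mpr h'), map_neg, map_sum]
    have key : ∑ k ∈ Finset.range (m - n),
        (TensorProduct.comm F (Polynomial F) (Polynomial F))
          ((Polynomial.X ^ (n + k)) ⊗ₜ[F] (Polynomial.X ^ (m - k)))
        = ∑ j ∈ Finset.range (m - n),
          (Polynomial.X ^ (n + (j+1))) ⊗ₜ[F] (Polynomial.X ^ (m - (j+1))) := by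
      rw [← Finset.sum_range_reflect]
      apply Finset.sum_congr rfl
      intro j hj
      simp only [Finset.mem_range] at hj
      rw [TensorProduct.comm_tmul]
      congr 2 <;> omega
    rw [key, ← sub_eq_add_neg, ← Finset.sum_sub_distrib]
    rw [Finset.sum_range_sub' (fun j =>
      ((Polynomial.X : Polynomial F) ^ (n + j)) ⊗ₜ[F] ((Polynomial.X : Polynomial F) ^ (m - j))) (m - n)]
    have e1 : n + (m - n) = m := by omega
    have e2 : m - (m - n) = n := by omega
    rw [Nat.add_zero, Nat.sub_zero, e1, e2]

lemma comm_comm_apply (F : Type*) [Field F] (x : Polynomial F ⊗[F] Polynomial F) :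
    (TensorProduct.comm F (Polynomial F) (Polynomial F))
      ((TensorProduct.comm F (Polynomial F) (Polynomial F)) x) = x := by
  induction x with
  | zero => simp
  | tmul a b => simp
  | add a b ha hb => simp [ha, hb]

lemma brMono_key (F : Type*) [Field F] (n m : ℕ) :
    brMono F n m + (TensorProduct.comm F (Polynomial F) (Polynomial F)) (brMono F m n)
      = (Polynomial.X ^ n) ⊗ₜ[F] (Polynomial.X ^ m)
        - (Polynomial.X ^ m) ⊗ₜ[F] (Polynomial.X ^ n) := by
  rcases le_total n m with h | h
  · exact brMono_key_le F h
  · have := brMono_key_le F h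
    have h2 := congrArg (TensorProduct.comm F (Polynomial F) (Polynomial F)) this
    simp only [map_add, map_sub, TensorProduct.comm_tmul] at h2
    rw [comm_comm_apply] at h2
    linear_combination (norm := module) h2

/-- The double bracket `⟦tⁿ,tᵐ⟧ = -(tⁿ⊗t^{m+1} - tᵐ⊗t^{n+1})/(t⊗1-1⊗t)` on `F[t]`
satisfies the `1`-double Lie anti-commutativity
`⟦a,b⟧ + τ(⟦b,a⟧) = a⊗b - b⊗a`. -/
theorem Dbr_one_anticomm (F : Type*) [Field F] :
    ∀ a b : Polynomial F,
      Dbr F a b + (TensorProduct.comm F (Polynomial F) (Polynomial F)) (Dbr F b a)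
        = a ⊗ₜ[F] b - b ⊗ₜ[F] a := by
  set L : Polynomial F →ₗ[F] Polynomial F →ₗ[F] (Polynomial F ⊗[F] Polynomial F) :=
    Dbr F + ((Dbr F).flip.compr₂
      (TensorProduct.comm F (Polynomial F) (Polynomial F)).toLinearMap) with hL
  suffices h : L + (TensorProduct.mk F (Polynomial F) (Polynomial F)).flip
      = TensorProduct.mk F (Polynomial F) (Polynomial F) by
    intro a b
    have := LinearMap.congr_fun (LinearMap.congr_fun h a) b
    simp only [hL, LinearMap.add_apply, LinearMap.compr₂_apply, LinearMap.flip_apply,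
      TensorProduct.mk_apply, LinearEquiv.coe_coe] at this
    rw [eq_sub_iff_add_eq]
    exact this
  apply (Polynomial.basisMonomials F).ext; intro n
  apply (Polynomial.basisMonomials F).ext; intro m
  have : (Polynomial.basisMonomials F : ℕ → Polynomial F)
      = fun s => Polynomial.X ^ s := by
    simp [Polynomial.coe_basisMonomials, Polynomial.X_pow_eq_monomial]
  simp only [hL, LinearMap.add_apply, LinearMap.sub_apply, LinearMap.compr₂_apply,
    LinearMap.flip_apply, TensorProduct.mk_apply, LinearEquiv.coe_coe, Dbr,
    Module.Basis.constr_basis]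
  rw [this]
  have hk := brMono_key F n m
  rw [eq_sub_iff_add_eq] at hk
  exact hk
end

section
/- The 1-double Lie algebra M₁ = F[t] with bracket ⟦tⁿ,tᵐ⟧ = -(tⁿ⊗t^{m+1} - tᵐ⊗t^{n+1})/(t⊗1-1⊗t) has exactly one nonzero proper ideal, namely I = tF[t], and the linear map ξ : M₁ → I given by ξ(tⁿ) = t^{n+1} is an isomorphism of double Lie algebras from M₁ onto I. -/
open scoped TensorProduct

/-- The submodule `W ⊗ V + V ⊗ W` of `V ⊗ V` for `V = F[t]`. -/
noncomputable def sideTensor (F : Type*) [Field F] (W : Submodule F (Polynomial F)) :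
    Submodule F (Polynomial F ⊗[F] Polynomial F) :=
  LinearMap.range (LinearMap.rTensor (Polynomial F) W.subtype) ⊔
    LinearMap.range (LinearMap.lTensor (Polynomial F) W.subtype)

/-- `W` is an ideal of the double Lie algebra `(F[t], Dbr)`:
`⟦V,W⟧ + ⟦W,V⟧ ⊆ W ⊗ V + V ⊗ W`. -/
def IsDblIdeal (F : Type*) [Field F] (W : Submodule F (Polynomial F)) : Prop :=
  ∀ a b : Polynomial F, b ∈ W →
    Dbr F a b ∈ sideTensor F W ∧ Dbr F b a ∈ sideTensor F W

namespace M1Aux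

open Polynomial

variable (F : Type*) [Field F]

lemma Dbr_pow (n m : ℕ) : Dbr F (X ^ n) (X ^ m) = brMono F n m := by
  have h : ∀ k : ℕ, (Polynomial.basisMonomials F) k = (X : F[X]) ^ k := by
    intro k; rw [Polynomial.coe_basisMonomials]; exact (Polynomial.X_pow_eq_monomial k).symm
  rw [Dbr, ← h, ← h, Module.Basis.constr_basis, Module.Basis.constr_basis]

/-- The pairing `f ⊗ g` as a functional on the tensor square. -/
noncomputable def pairL (f g : Polynomial F →ₗ[F] F) :
    Polynomial F ⊗[F] Polynomial F →ₗ[F] F :=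
  LinearMap.mul' F F ∘ₗ TensorProduct.map f g

@[simp] lemma pairL_tmul (f g : Polynomial F →ₗ[F] F) (x y : Polynomial F) :
    pairL F f g (x ⊗ₜ[F] y) = f x * g y := by
  simp [pairL]

lemma pairL_vanish {W : Submodule F (Polynomial F)} {f g : Polynomial F →ₗ[F] F}
    (hf : ∀ w ∈ W, f w = 0) (hg : ∀ w ∈ W, g w = 0)
    {t : Polynomial F ⊗[F] Polynomial F} (ht : t ∈ sideTensor F W) :
    pairL F f g t = 0 := by
  rw [sideTensor, Submodule.mem_sup] at ht
  obtain ⟨x, ⟨zx, rfl⟩, y, ⟨zy, rfl⟩, rfl⟩ := ht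
  have h1 : ∀ z : ↥W ⊗[F] Polynomial F,
      pairL F f g (LinearMap.rTensor (Polynomial F) W.subtype z) = 0 := by
    intro z
    induction z with
    | zero => simp
    | tmul w v => simp [hf w.1 w.2]
    | add a b ha hb => simp [ha, hb]
  have h2 : ∀ z : Polynomial F ⊗[F] ↥W,
      pairL F f g (LinearMap.lTensor (Polynomial F) W.subtype z) = 0 := by
    intro z
    induction z with
    | zero => simp
    | tmul v w => simp [hg w.1 w.2]
    | add a b ha hb => simp [ha, hb]
  simp [h1, h2]

lemma tmul_mem_sideTensor_left {W : Submodule F (Polynomial F)} {x : Polynomial F}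
    (hx : x ∈ W) (y : Polynomial F) : x ⊗ₜ[F] y ∈ sideTensor F W :=
  Submodule.mem_sup_left ⟨(⟨x, hx⟩ : W) ⊗ₜ[F] y, rfl⟩

lemma tmul_mem_sideTensor_right {W : Submodule F (Polynomial F)} {y : Polynomial F}
    (hy : y ∈ W) (x : Polynomial F) : x ⊗ₜ[F] y ∈ sideTensor F W :=
  Submodule.mem_sup_right ⟨x ⊗ₜ[F] (⟨y, hy⟩ : W), rfl⟩

local notation "Ix" => LinearMap.range (LinearMap.mulLeft F (Polynomial.X : Polynomial F))

lemma X_pow_succ_mem (k : ℕ) : (X : F[X]) ^ (k + 1) ∈ Ix :=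
  ⟨X ^ k, by simp [LinearMap.mulLeft_apply, pow_succ']⟩

lemma X_pow_mem {e : ℕ} (he : 1 ≤ e) : (X : F[X]) ^ e ∈ Ix := by
  obtain ⟨k, rfl⟩ : ∃ k, e = k + 1 := ⟨e - 1, by omega⟩
  exact X_pow_succ_mem F k

lemma brMono_mem_right (n m : ℕ) (hm : 1 ≤ m) : brMono F n m ∈ sideTensor F Ix := by
  rw [brMono]
  split_ifs with h
  · refine Submodule.sum_mem _ fun j hj => ?_
    rw [Finset.mem_range] at hj
    exact tmul_mem_sideTensor_right F (X_pow_mem F (by omega)) _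
  · refine Submodule.neg_mem _ (Submodule.sum_mem _ fun k hk => ?_)
    rw [Finset.mem_range] at hk
    exact tmul_mem_sideTensor_right F (X_pow_mem F (by omega)) _

lemma brMono_mem_left (n m : ℕ) (hn : 1 ≤ n) : brMono F n m ∈ sideTensor F Ix := by
  rw [brMono]
  split_ifs with h
  · refine Submodule.sum_mem _ fun j hj => ?_
    exact tmul_mem_sideTensor_left F (X_pow_mem F (by omega)) _
  · refine Submodule.neg_mem _ (Submodule.sum_mem _ fun k hk => ?_)
    rw [Finset.mem_range] at hk
    exact tmul_mem_sideTensor_right F (X_pow_mem F (by omega)) _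

lemma Dbr_pow_mem_right (a : Polynomial F) (m : ℕ) :
    Dbr F a (X ^ (m + 1)) ∈ sideTensor F Ix := by
  induction a using Polynomial.induction_on' with
  | add p q hp hq => rw [map_add, LinearMap.add_apply]; exact Submodule.add_mem _ hp hq
  | monomial n c =>
    rw [← Polynomial.smul_X_eq_monomial, map_smul, LinearMap.smul_apply, Dbr_pow]
    exact Submodule.smul_mem _ _ (brMono_mem_right F n (m + 1) (by omega))

lemma Dbr_pow_mem_left (a : Polynomial F) (m : ℕ) :
    Dbr F (X ^ (m + 1)) a ∈ sideTensor F Ix := by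
  induction a using Polynomial.induction_on' with
  | add p q hp hq => rw [map_add]; exact Submodule.add_mem _ hp hq
  | monomial n c =>
    rw [← Polynomial.smul_X_eq_monomial, map_smul, Dbr_pow]
    exact Submodule.smul_mem _ _ (brMono_mem_left F (m + 1) n (by omega))

lemma Ix_isIdeal : IsDblIdeal F Ix := by
  intro a b hb
  obtain ⟨p, rfl⟩ := hb
  have key : ∀ p : Polynomial F,
      Dbr F a (X * p) ∈ sideTensor F Ix ∧ Dbr F (X * p) a ∈ sideTensor F Ix := by
    intro p
    induction p using Polynomial.induction_on' with
    | add p q hp hq =>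
      rw [mul_add]
      constructor
      · rw [map_add]; exact Submodule.add_mem _ hp.1 hq.1
      · rw [map_add, LinearMap.add_apply]; exact Submodule.add_mem _ hp.2 hq.2
    | monomial n c =>
      have hxm : (X : F[X]) * monomial n c = c • X ^ (n + 1) := by
        rw [← Polynomial.smul_X_eq_monomial, mul_smul_comm, ← pow_succ']
      rw [hxm]
      constructor
      · rw [map_smul]
        exact Submodule.smul_mem _ _ (Dbr_pow_mem_right F a n)
      · rw [map_smul, LinearMap.smul_apply]
        exact Submodule.smul_mem _ _ (Dbr_pow_mem_left F a n)
  exact key p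

/-- separation -/
lemma exists_dual {W : Submodule F (Polynomial F)} {x : Polynomial F} (hx : x ∉ W) :
    ∃ f : Polynomial F →ₗ[F] F, (∀ w ∈ W, f w = 0) ∧ f x ≠ 0 := by
  have hπ : W.mkQ x ≠ 0 := by
    rw [Submodule.mkQ_apply, ne_eq, Submodule.Quotient.mk_eq_zero]
    exact hx
  have := (Module.forall_dual_apply_eq_zero_iff F (W.mkQ x)).not.mpr hπ
  push_neg at this
  obtain ⟨φ, hφ⟩ := this
  refine ⟨φ ∘ₗ W.mkQ, fun w hw => ?_, hφ⟩
  rw [LinearMap.comp_apply, Submodule.mkQ_apply, (Submodule.Quotient.mk_eq_zero W).mpr hw,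
    map_zero]

lemma mem_of_forall_dual {W : Submodule F (Polynomial F)} {x : Polynomial F}
    (h : ∀ f : Polynomial F →ₗ[F] F, (∀ w ∈ W, f w = 0) → f x = 0) : x ∈ W := by
  by_contra hx
  obtain ⟨f, hf, hfx⟩ := exists_dual F hx
  exact hfx (h f hf)

lemma pairL_brMono_step (f : Polynomial F →ₗ[F] F) (k : ℕ) :
    pairL F f f (brMono F (k + 2) k) =
      -(f (X ^ k) * f (X ^ (k + 2)) + f (X ^ (k + 1)) * f (X ^ (k + 1))) := by
  rw [brMono, if_neg (by omega)]
  have h2 : k + 2 - k = 2 := by omega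
  rw [h2, map_neg, Finset.sum_range_succ, Finset.sum_range_one, map_add]
  have e0 : k + 2 - 0 = k + 2 := by omega
  have e1 : k + 2 - 1 = k + 1 := by omega
  rw [e0, e1]
  simp

/-- the upward induction step: `X^k ∈ W → X^(k+1) ∈ W` for any ideal `W`. -/
lemma step {W : Submodule F (Polynomial F)} (hW : IsDblIdeal F W) {k : ℕ}
    (hk : (X : F[X]) ^ k ∈ W) : (X : F[X]) ^ (k + 1) ∈ W := by
  apply mem_of_forall_dual
  intro f hf
  have h0 : pairL F f f (Dbr F (X ^ (k + 2)) (X ^ k)) = 0 :=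
    pairL_vanish F hf hf (hW (X ^ (k + 2)) (X ^ k) hk).1
  rw [Dbr_pow, pairL_brMono_step, hf _ hk] at h0
  rw [zero_mul, zero_add, neg_eq_zero] at h0
  exact mul_self_eq_zero.mp h0

lemma pairL_brMono_zero (f g : Polynomial F →ₗ[F] F) (m : ℕ) :
    pairL F f g (brMono F 0 m) = ∑ j ∈ Finset.range m, f (X ^ j) * g (X ^ (m - j)) := by
  rw [brMono, if_pos (Nat.zero_le m), Nat.sub_zero, map_sum]
  exact Finset.sum_congr rfl fun j hj => by rw [Nat.zero_add, pairL_tmul]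

/-- key lemma: a minimal-degree element of a nonzero ideal forces `X ∈ W`. -/
lemma X_mem_of_minimal {W : Submodule F (Polynomial F)} (hW : IsDblIdeal F W)
    {b : Polynomial F} (hbW : b ∈ W) (hb0 : b ≠ 0) (hd : 1 ≤ b.natDegree)
    (hmin : ∀ w ∈ W, w ≠ 0 → b.natDegree ≤ w.natDegree) : (X : F[X]) ∈ W := by
  apply mem_of_forall_dual
  intro g hg
  set d := b.natDegree with hdd
  clear_value d
  set w : F[X] := ∑ j ∈ Finset.range d,
    (∑ k ∈ Finset.range (d - j), b.coeff (j + k + 1) * g (X ^ (k + 1))) • X ^ j with hw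
  -- claim A : f w = pairL f g (Dbr 1 b) for every f
  have hb_expand : b = ∑ m ∈ Finset.range (d + 1), b.coeff m • X ^ m := by
    conv_lhs => rw [Polynomial.as_sum_range b]
    simp only [← hdd]
    exact Finset.sum_congr rfl fun m _ => (Polynomial.smul_X_eq_monomial).symm
  have claimA : ∀ f : Polynomial F →ₗ[F] F, f w = pairL F f g (Dbr F 1 b) := by
    intro f
    have h1 : Dbr F (1 : F[X]) b = ∑ m ∈ Finset.range (d + 1), b.coeff m • brMono F 0 m := by
      conv_lhs => rw [show (1 : F[X]) = X ^ 0 by rw [pow_zero], hb_expand]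
      rw [map_sum]
      exact Finset.sum_congr rfl fun m _ => by rw [map_smul, Dbr_pow]
    have h2 : ∀ m ∈ Finset.range (d + 1),
        pairL F f g (b.coeff m • brMono F 0 m)
          = ∑ j ∈ Finset.range m, b.coeff m * (f (X ^ j) * g (X ^ (m - j))) := by
      intro m _
      rw [map_smul, smul_eq_mul, pairL_brMono_zero, Finset.mul_sum]
    have hR : pairL F f g (Dbr F 1 b)
        = ∑ m ∈ Finset.range (d + 1), ∑ j ∈ Finset.range m,
            b.coeff m * (f (X ^ j) * g (X ^ (m - j))) := by
      rw [h1, map_sum]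
      exact Finset.sum_congr rfl h2
    have h3 : ∀ j ∈ Finset.range d,
        f ((∑ k ∈ Finset.range (d - j), b.coeff (j + k + 1) * g (X ^ (k + 1))) • X ^ j)
          = ∑ k ∈ Finset.range (d - j), b.coeff (j + k + 1) * g (X ^ (k + 1)) * f (X ^ j) := by
      intro j _
      rw [map_smul, smul_eq_mul, Finset.sum_mul]
    have hL : f w = ∑ j ∈ Finset.range d, ∑ k ∈ Finset.range (d - j),
        b.coeff (j + k + 1) * g (X ^ (k + 1)) * f (X ^ j) := by
      rw [hw, map_sum]
      exact Finset.sum_congr rfl h3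
    rw [hL, hR, Finset.sum_sigma', Finset.sum_sigma']
    refine Finset.sum_nbij' (fun y => ⟨y.1 + y.2 + 1, y.1⟩) (fun x => ⟨x.2, x.1 - x.2 - 1⟩)
      ?_ ?_ ?_ ?_ ?_
    · rintro ⟨j, k⟩ hy
      simp only [Finset.mem_sigma, Finset.mem_range] at hy ⊢
      omega
    · rintro ⟨m, j⟩ hx
      simp only [Finset.mem_sigma, Finset.mem_range] at hx ⊢
      omega
    · rintro ⟨j, k⟩ hy
      simp only [Finset.mem_sigma, Finset.mem_range] at hy
      simp only [Sigma.mk.inj_iff, heq_eq_eq]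
      constructor <;> first | trivial | omega
    · rintro ⟨m, j⟩ hx
      simp only [Finset.mem_sigma, Finset.mem_range] at hx
      simp only [Sigma.mk.inj_iff, heq_eq_eq]
      constructor <;> first | trivial | omega
    · rintro ⟨j, k⟩ hy
      simp only [Finset.mem_sigma, Finset.mem_range] at hy
      have e1 : j + k + 1 - j = k + 1 := by omega
      rw [e1]
      ring
  -- hence w ∈ W
  have hwW : w ∈ W := by
    apply mem_of_forall_dual
    intro f hf
    rw [claimA f]
    exact pairL_vanish F hf hg (hW 1 b hbW).1
  -- coefficients of w
  have hcoeff : ∀ e : ℕ, w.coeff e =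
      if e ∈ Finset.range d then
        ∑ k ∈ Finset.range (d - e), b.coeff (e + k + 1) * g (X ^ (k + 1))
      else 0 := by
    intro e
    rw [hw, Polynomial.finset_sum_coeff]
    rw [Finset.sum_congr rfl (fun j _ => by
      rw [Polynomial.coeff_smul, Polynomial.coeff_X_pow, smul_eq_mul, mul_ite, mul_one, mul_zero])]
    exact Finset.sum_ite_eq _ _ _
  -- w has all coefficients ≥ d zero, so by minimality w = 0
  have hw0 : w = 0 := by
    by_contra hne
    have hdeg := hmin w hwW hne
    have : w.coeff w.natDegree ≠ 0 := Polynomial.leadingCoeff_ne_zero.mpr hne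
    rw [hcoeff w.natDegree, if_neg (by rw [Finset.mem_range]; omega)] at this
    exact this rfl
  -- extract the coefficient at d - 1
  have hc : w.coeff (d - 1) = b.coeff d * g X := by
    rw [hcoeff, if_pos (Finset.mem_range.mpr (by omega))]
    have : d - (d - 1) = 1 := by omega
    rw [this, Finset.sum_range_one]
    have e1 : d - 1 + 0 + 1 = d := by omega
    rw [e1, pow_one]
  rw [hw0, Polynomial.coeff_zero] at hc
  have hbd : b.coeff d ≠ 0 := by
    rw [hdd]
    exact fun h => hb0 (Polynomial.leadingCoeff_eq_zero.mp h)
  have := hc.symm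
  rcases mul_eq_zero.mp this with h | h
  · exact absurd h hbd
  · exact h

lemma xi_pow (i : ℕ) : LinearMap.mulLeft F (X : F[X]) (X ^ i) = X ^ (i + 1) := by
  simp [LinearMap.mulLeft_apply, pow_succ']

lemma map_xi_brMono (n m : ℕ) :
    TensorProduct.map (LinearMap.mulLeft F (X : F[X])) (LinearMap.mulLeft F (X : F[X]))
      (brMono F n m) = brMono F (n + 1) (m + 1) := by
  rw [brMono, brMono]
  by_cases h : n ≤ m
  · rw [if_pos h, if_pos (by omega), map_sum]
    have hr : m + 1 - (n + 1) = m - n := by omega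
    rw [hr]
    refine Finset.sum_congr rfl fun j hj => ?_
    rw [Finset.mem_range] at hj
    rw [TensorProduct.map_tmul, xi_pow, xi_pow]
    have e1 : n + j + 1 = n + 1 + j := by omega
    have e2 : m - j + 1 = m + 1 - j := by omega
    rw [e1, e2]
  · rw [if_neg h, if_neg (by omega), map_neg, map_sum]
    have hr : n + 1 - (m + 1) = n - m := by omega
    rw [hr]
    congr 1
    refine Finset.sum_congr rfl fun k hk => ?_
    rw [Finset.mem_range] at hk
    rw [TensorProduct.map_tmul, xi_pow, xi_pow]
    have e1 : m + k + 1 = m + 1 + k := by omega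
    have e2 : n - k + 1 = n + 1 - k := by omega
    rw [e1, e2]

lemma equivar (a b : Polynomial F) :
    TensorProduct.map (LinearMap.mulLeft F (X : F[X])) (LinearMap.mulLeft F (X : F[X]))
      (Dbr F a b)
    = Dbr F (LinearMap.mulLeft F (X : F[X]) a) (LinearMap.mulLeft F (X : F[X]) b) := by
  set ξ := LinearMap.mulLeft F (X : F[X]) with hξ
  have hmono : ∀ (n : ℕ) (b : F[X]),
      TensorProduct.map ξ ξ (Dbr F (X ^ n) b) = Dbr F (X ^ (n + 1)) (ξ b) := by
    intro n b
    induction b using Polynomial.induction_on' with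
    | add p q hp hq => simp only [map_add, hp, hq]
    | monomial m c =>
      rw [← Polynomial.smul_X_eq_monomial]
      simp only [map_smul]
      rw [Dbr_pow, hξ, xi_pow, Dbr_pow, map_xi_brMono]
  induction a using Polynomial.induction_on' with
  | add p q hp hq =>
    simp only [map_add, LinearMap.add_apply, hp, hq]
  | monomial n c =>
    rw [← Polynomial.smul_X_eq_monomial]
    simp only [map_smul, LinearMap.smul_apply]
    rw [hmono n b]
    congr 1
    rw [hξ, xi_pow]

end M1Aux

/-- The 1-double Lie algebra `M₁ = F[t]` has exactly one nonzero proper ideal,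
namely `I = tF[t]`, and `ξ : tⁿ ↦ t^{n+1}` is an isomorphism of double Lie
algebras from `M₁` onto `I`. -/
theorem M1_unique_ideal (F : Type*) [Field F] :
    IsDblIdeal F (LinearMap.range (LinearMap.mulLeft F (Polynomial.X : Polynomial F))) ∧
    LinearMap.range (LinearMap.mulLeft F (Polynomial.X : Polynomial F)) ≠ ⊥ ∧
    LinearMap.range (LinearMap.mulLeft F (Polynomial.X : Polynomial F)) ≠ ⊤ ∧
    (∀ W : Submodule F (Polynomial F), IsDblIdeal F W → W ≠ ⊥ → W ≠ ⊤ →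
      W = LinearMap.range (LinearMap.mulLeft F (Polynomial.X : Polynomial F))) ∧
    (∃ ξ : Polynomial F →ₗ[F] Polynomial F,
      (∀ n : ℕ, ξ (Polynomial.X ^ n) = Polynomial.X ^ (n + 1)) ∧
      Function.Injective ξ ∧
      LinearMap.range ξ =
        LinearMap.range (LinearMap.mulLeft F (Polynomial.X : Polynomial F)) ∧
      (∀ a b : Polynomial F,
        TensorProduct.map ξ ξ (Dbr F a b) = Dbr F (ξ a) (ξ b))) := by
  classical
  open Polynomial M1Aux in
  refine ⟨Ix_isIdeal F, ?_, ?_, ?_, ?_⟩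
  · -- I ≠ ⊥
    rw [Submodule.ne_bot_iff]
    refine ⟨X, ?_, Polynomial.X_ne_zero⟩
    have := X_pow_mem F (le_refl 1)
    rwa [pow_one] at this
  · -- I ≠ ⊤
    intro h
    have h1 : (1 : Polynomial F) ∈
        LinearMap.range (LinearMap.mulLeft F (Polynomial.X : Polynomial F)) := by
      rw [h]; trivial
    obtain ⟨p, hp⟩ := h1
    have : ((X : Polynomial F) * p).coeff 0 = (1 : Polynomial F).coeff 0 := by
      rw [show (X : Polynomial F) * p = 1 from hp]
    rw [Polynomial.mul_coeff_zero, Polynomial.coeff_X_zero, zero_mul,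
      Polynomial.coeff_one_zero] at this
    exact one_ne_zero this.symm
  · -- uniqueness
    intro W hW hbot htop
    obtain ⟨b₀, hb₀W, hb₀⟩ := Submodule.ne_bot_iff W |>.mp hbot
    have hP : ∃ n, ∃ w : Polynomial F, w ∈ W ∧ w ≠ 0 ∧ w.natDegree = n :=
      ⟨b₀.natDegree, b₀, hb₀W, hb₀, rfl⟩
    obtain ⟨b, hbW, hb0, hbd⟩ := Nat.find_spec hP
    have hmin : ∀ w ∈ W, w ≠ 0 → b.natDegree ≤ w.natDegree := fun w hw h0 =>
      hbd ▸ Nat.find_min' hP ⟨w, hw, h0, rfl⟩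
    have hX : (X : Polynomial F) ∈ W := by
      by_cases hd : 1 ≤ b.natDegree
      · exact X_mem_of_minimal F hW hbW hb0 hd hmin
      · have hdeg0 : b.natDegree = 0 := by omega
        obtain ⟨c, hc⟩ := Polynomial.natDegree_eq_zero.mp hdeg0
        have hc0 : c ≠ 0 := fun h => hb0 (by rw [← hc, h, map_zero])
        have h1 : (1 : Polynomial F) ∈ W := by
          have hs : c⁻¹ • b ∈ W := W.smul_mem _ hbW
          rwa [← hc, Polynomial.smul_C, smul_eq_mul, inv_mul_cancel₀ hc0, map_one] at hs
        have := step F hW (k := 0) (by rwa [pow_zero])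
        rwa [pow_one] at this
    have hpows : ∀ k : ℕ, (X : Polynomial F) ^ (k + 1) ∈ W := by
      intro k
      induction k with
      | zero => simpa using hX
      | succ k ih => exact step F hW ih
    have hmul : ∀ p : Polynomial F, (X : Polynomial F) * p ∈ W := by
      intro p
      induction p using Polynomial.induction_on' with
      | add p q hp hq => rw [mul_add]; exact W.add_mem hp hq
      | monomial n c =>
        have hxm : (X : Polynomial F) * Polynomial.monomial n c = c • X ^ (n + 1) := by
          rw [← Polynomial.smul_X_eq_monomial, mul_smul_comm, ← pow_succ']
        rw [hxm]
        exact W.smul_mem _ (hpows n)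
    have hIW : LinearMap.range (LinearMap.mulLeft F (Polynomial.X : Polynomial F)) ≤ W := by
      rintro _ ⟨p, rfl⟩
      exact hmul p
    refine le_antisymm ?_ hIW
    intro w hw
    have h0 : w.coeff 0 = 0 := by
      by_contra h0
      have hC : (Polynomial.C (w.coeff 0) : Polynomial F) ∈ W := by
        have heq : w - X * w.divX = Polynomial.C (w.coeff 0) := by
          linear_combination -Polynomial.X_mul_divX_add w
        rw [← heq]
        exact W.sub_mem hw (hIW ⟨w.divX, rfl⟩)
      have h1 : (1 : Polynomial F) ∈ W := by
        have hs : (w.coeff 0)⁻¹ • (Polynomial.C (w.coeff 0) : Polynomial F) ∈ W :=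
          W.smul_mem _ hC
        rwa [Polynomial.smul_C, smul_eq_mul, inv_mul_cancel₀ h0, map_one] at hs
      apply htop
      rw [eq_top_iff]
      intro p _
      have hp : p = X * p.divX + Polynomial.C (p.coeff 0) :=
        (Polynomial.X_mul_divX_add p).symm
      rw [hp]
      refine W.add_mem (hIW ⟨p.divX, rfl⟩) ?_
      have : (Polynomial.C (p.coeff 0) : Polynomial F) = p.coeff 0 • (1 : Polynomial F) := by
        rw [Polynomial.smul_eq_C_mul, mul_one]
      rw [this]
      exact W.smul_mem _ h1
    obtain ⟨q, hq⟩ := Polynomial.X_dvd_iff.mpr h0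
    exact ⟨q, hq.symm⟩
  · -- the isomorphism ξ
    refine ⟨LinearMap.mulLeft F (Polynomial.X : Polynomial F), fun n => xi_pow F n, ?_, rfl, ?_⟩
    · intro p q h
      exact mul_left_cancel₀ Polynomial.X_ne_zero h
    · exact fun a b => equivar F a b
end
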